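/- Let p ∈ U. Then C(p) = {p} (i.e., p is a 0-cell of the restricted graphical arrangement) if and only if there exists a nonempty subset I ⊆ [n] such that both induced subgraphs G[I] and G[V∖I] are connected and p = (1/|I|)·e_I. -/

import Mathlib

open Finset

/-- The vertex-induced subgraph on `S` of the multigraph with edge-multiplicity
function `μ` is connected: any two vertices of `S` are joined by a walk inside `S`. -/
def ConnectedOn {n : ℕ} (μ : Fin (n + 1) → Fin (n + 1) → ℕ) (S : Set (Fin (n + 1))) : Prop :=
  ∀ i ∈ S, ∀ j ∈ S, Relation.ReflTransGen (fun a b => a ∈ S ∧ b ∈ S ∧ 1 ≤ μ a b) i j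

/-- The affine subspace `U = { x ∈ ℝ^{n+1} : x_{n+1} = 0, x_1 + ⋯ + x_n = 1 }`. -/
def U (n : ℕ) : Set (Fin (n + 1) → ℝ) :=
  {x | x (Fin.last n) = 0 ∧ ∑ i : Fin n, x i.castSucc = 1}

/-- The open cell of `p` in the restriction of the graphical arrangement of `μ` to `U`. -/
def openCell {n : ℕ} (μ : Fin (n + 1) → Fin (n + 1) → ℕ) (p : Fin (n + 1) → ℝ) :
    Set (Fin (n + 1) → ℝ) :=
  {q | q ∈ U n ∧ ∀ i j, 1 ≤ μ i j →
    ((q i < q j ↔ p i < p j) ∧ (q i = q j ↔ p i = p j))}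

/-- The closed cell of `p` in the restriction of the graphical arrangement of `μ` to `U`. -/
def closedCell {n : ℕ} (μ : Fin (n + 1) → Fin (n + 1) → ℕ) (p : Fin (n + 1) → ℝ) :
    Set (Fin (n + 1) → ℝ) :=
  {q | q ∈ U n ∧ ∀ i j, 1 ≤ μ i j →
    ((p i < p j → q i ≤ q j) ∧ (p i = p j → q i = q j))}

/-- `p`-equivalence: `i ∼_p j` iff there is a path in the graph along which `p` is constant. -/
def pEquiv {n : ℕ} (μ : Fin (n + 1) → Fin (n + 1) → ℕ) (p : Fin (n + 1) → ℝ)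
    (i j : Fin (n + 1)) : Prop :=
  Relation.ReflTransGen (fun a b => 1 ≤ μ a b ∧ p a = p b) i j

/-- `d_I(i)`: the number of edges from vertex `i` to the complement of `I`. -/
def dI {n : ℕ} (μ : Fin (n + 1) → Fin (n + 1) → ℕ) (I : Finset (Fin (n + 1)))
    (i : Fin (n + 1)) : ℕ :=
  ∑ j ∈ Iᶜ, μ i j

/-- `ε_I(i) = d_I(i)` for `i ∈ I` and `0` otherwise. -/
def epsI {n : ℕ} (μ : Fin (n + 1) → Fin (n + 1) → ℕ) (I : Finset (Fin (n + 1)))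
    (i : Fin (n + 1)) : ℕ :=
  if i ∈ I then dI μ I i else 0

/-- The point `(1/|I|) · e_I`, where `e_I` is the 0/1 indicator vector of `I`. -/
noncomputable def qI {n : ℕ} (I : Finset (Fin (n + 1))) : Fin (n + 1) → ℝ :=
  fun i => if i ∈ I then 1 / (I.card : ℝ) else 0

/-- `D_i(p)`: the number of edges `ij` with `p_i > p_j`. -/
noncomputable def Dlab {n : ℕ} (μ : Fin (n + 1) → Fin (n + 1) → ℕ) (p : Fin (n + 1) → ℝ) (i : Fin n) : ℕ :=
  ∑ j ∈ Finset.univ.filter (fun j => p j < p i.castSucc), μ i.castSucc j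

/-- The monomial `m_I = ∏_{i ∈ [n]} x_i^{ε_I(i)}`. -/
noncomputable def mI {n : ℕ} (k : Type*) [Field k] (μ : Fin (n + 1) → Fin (n + 1) → ℕ)
    (I : Finset (Fin (n + 1))) : MvPolynomial (Fin n) k :=
  ∏ i : Fin n, MvPolynomial.X i ^ epsI μ I i.castSucc

/-- The monomial ideal `M_G = ⟨ m_I : ∅ ≠ I ⊆ [n] ⟩`. -/
noncomputable def MG {n : ℕ} (k : Type*) [Field k] (μ : Fin (n + 1) → Fin (n + 1) → ℕ) :
    Ideal (MvPolynomial (Fin n) k) :=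
  Ideal.span {f | ∃ I : Finset (Fin (n + 1)), I.Nonempty ∧ Fin.last n ∉ I ∧ f = mI k μ I}


section stmt2Aux

variable {n : ℕ} {μ : Fin (n + 1) → Fin (n + 1) → ℕ} {p : Fin (n + 1) → ℝ}

private lemma pEquiv_symm (hsym : ∀ i j, μ i j = μ j i) {i j} (h : pEquiv μ p i j) :
    pEquiv μ p j i := by
  induction h with
  | refl => exact .refl
  | tail h' step ih =>
    exact Relation.ReflTransGen.head ⟨by rw [hsym]; exact step.1, step.2.symm⟩ ih

private lemma pEquiv_eq {i j} (h : pEquiv μ p i j) : p i = p j := by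
  induction h with
  | refl => rfl
  | tail _ step ih => exact ih.trans step.2

private lemma walk_in (S : Set (Fin (n+1))) {i j} (hi : i ∈ S)
    (hcl : ∀ a b, a ∈ S → 1 ≤ μ a b → p a = p b → b ∈ S)
    (h : pEquiv μ p i j) :
    j ∈ S ∧ Relation.ReflTransGen (fun a b => a ∈ S ∧ b ∈ S ∧ 1 ≤ μ a b) i j := by
  induction h with
  | refl => exact ⟨hi, .refl⟩
  | tail h' step ih =>
    obtain ⟨hb, hw⟩ := ih
    have hc := hcl _ _ hb step.1 step.2
    exact ⟨hc, hw.tail ⟨hb, hc, step.1⟩⟩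

private lemma walk_const {S : Set (Fin (n+1))} (f : Fin (n+1) → ℝ)
    (hstep : ∀ a b, a ∈ S → b ∈ S → 1 ≤ μ a b → f a = f b) {i j}
    (h : Relation.ReflTransGen (fun a b => a ∈ S ∧ b ∈ S ∧ 1 ≤ μ a b) i j) :
    f i = f j := by
  induction h with
  | refl => rfl
  | tail _ step ih => exact ih.trans (hstep _ _ step.1 step.2.1 step.2.2)

private lemma sum_all' (hp : p ∈ U n) : ∑ i : Fin (n+1), p i = 1 := by
  rw [Fin.sum_univ_castSucc, hp.1, hp.2, add_zero]

private lemma perturb' (hp : p ∈ U n)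
    (A B : Finset (Fin (n+1)))
    (hA : A.Nonempty) (hB : B.Nonempty) (hdisj : Disjoint A B)
    (hlA : Fin.last n ∉ A) (hlB : Fin.last n ∉ B)
    (hclA : ∀ i j, 1 ≤ μ i j → p i = p j → (i ∈ A ↔ j ∈ A))
    (hclB : ∀ i j, 1 ≤ μ i j → p i = p j → (i ∈ B ↔ j ∈ B)) :
    ∃ q, q ∈ openCell μ p ∧ q ≠ p := by
  have hsum := sum_all' hp
  have hne : ∃ i, p i ≠ 0 := by
    by_contra hc
    push_neg at hc
    have h0 : ∑ i : Fin (n+1), p i = 0 := by simp [hc]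
    rw [hsum] at h0; norm_num at h0
  obtain ⟨i0, hi0⟩ := hne
  obtain ⟨t, ht, h2t⟩ : ∃ t : ℝ, 0 < t ∧ ∀ i j, p i < p j → t + t < p j - p i := by
    have hs : (univ.filter (fun x : Fin (n+1) × Fin (n+1) => p x.1 < p x.2)).Nonempty := by
      rcases lt_or_gt_of_ne hi0 with hlt | hgt
      · exact ⟨(i0, Fin.last n), by simp [hp.1, hlt]⟩
      · exact ⟨(Fin.last n, i0), by simp [hp.1, hgt]⟩
    set ε : ℝ := (univ.filter (fun x : Fin (n+1) × Fin (n+1) => p x.1 < p x.2)).inf' hs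
      (fun x => p x.2 - p x.1) with hε_def
    have hε : 0 < ε := by
      rw [hε_def, Finset.lt_inf'_iff]
      intro b hb
      simp only [mem_filter] at hb
      linarith [hb.2]
    refine ⟨ε / 3, by positivity, fun i j hij => ?_⟩
    have hmem : (i, j) ∈ univ.filter (fun x : Fin (n+1) × Fin (n+1) => p x.1 < p x.2) := by
      simp [hij]
    have hle := Finset.inf'_le (fun x : Fin (n+1) × Fin (n+1) => p x.2 - p x.1) hmem
    rw [← hε_def] at hle
    linarith
  obtain ⟨r, hrlast, hrsum, hrbnd, hrcongr, a, haA, hra⟩ :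
      ∃ r : Fin (n+1) → ℝ, r (Fin.last n) = 0 ∧ (∑ i : Fin (n+1), r i) = 0 ∧
        (∀ i, -t ≤ r i ∧ r i ≤ t) ∧
        (∀ i j, (i ∈ A ↔ j ∈ A) → (i ∈ B ↔ j ∈ B) → r i = r j) ∧
        ∃ a ∈ A, 0 < r a := by
    have hcardA : (1:ℝ) ≤ (A.card : ℝ) := by exact_mod_cast hA.card_pos
    have hcardB : (1:ℝ) ≤ (B.card : ℝ) := by exact_mod_cast hB.card_pos
    have htA : 0 < t / (A.card : ℝ) := by positivity
    have htB : 0 < t / (B.card : ℝ) := by positivity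
    have htA' : t / (A.card : ℝ) ≤ t := div_le_self ht.le hcardA
    have htB' : t / (B.card : ℝ) ≤ t := div_le_self ht.le hcardB
    refine ⟨fun i => (if i ∈ A then t / (A.card : ℝ) else 0)
        - (if i ∈ B then t / (B.card : ℝ) else 0),
      by simp [hlA, hlB], ?_, ?_, ?_, ?_⟩
    · beta_reduce
      rw [Finset.sum_sub_distrib, Finset.sum_ite_mem, Finset.sum_ite_mem,
        Finset.univ_inter, Finset.univ_inter, Finset.sum_const, Finset.sum_const,
        nsmul_eq_mul, nsmul_eq_mul]
      field_simp
      ring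
    · intro i
      beta_reduce
      by_cases hiA : i ∈ A
      · have hiB : i ∉ B := fun hb => (Finset.disjoint_left.1 hdisj hiA) hb
        rw [if_pos hiA, if_neg hiB]
        constructor <;> linarith
      · by_cases hiB : i ∈ B
        · rw [if_neg hiA, if_pos hiB]
          constructor <;> linarith
        · rw [if_neg hiA, if_neg hiB]
          constructor <;> linarith
    · intro i j h1 h2
      beta_reduce
      simp only [h1, h2]
    · obtain ⟨a, ha⟩ := hA
      have haB : a ∉ B := fun hb => (Finset.disjoint_left.1 hdisj ha) hb
      exact ⟨a, ha, by beta_reduce; rw [if_pos ha, if_neg haB]; linarith⟩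
  refine ⟨fun i => p i + r i, ⟨⟨?_, ?_⟩, ?_⟩, ?_⟩
  · beta_reduce; rw [hrlast, hp.1, add_zero]
  · beta_reduce
    have h1 : ∑ i : Fin (n+1), (p i + r i) = 1 := by
      rw [Finset.sum_add_distrib, hsum, hrsum, add_zero]
    rw [Fin.sum_univ_castSucc, hrlast, hp.1, add_zero, add_zero] at h1
    exact h1
  · intro i j hμ
    beta_reduce
    by_cases hpe : p i = p j
    · have hr : r i = r j := hrcongr i j (hclA i j hμ hpe) (hclB i j hμ hpe)
      constructor <;> constructor <;> intro h <;> linarith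
    · rcases lt_or_gt_of_ne hpe with hlt | hgt
      · have hb1 := (hrbnd i).2
        have hb2 := (hrbnd j).1
        have h2 := h2t i j hlt
        have hqlt : p i + r i < p j + r j := by linarith
        exact ⟨⟨fun _ => hlt, fun _ => hqlt⟩,
          ⟨fun h => absurd h hqlt.ne, fun h => absurd h hpe⟩⟩
      · have hb1 := (hrbnd j).2
        have hb2 := (hrbnd i).1
        have h2 := h2t j i hgt
        have hqgt : p j + r j < p i + r i := by linarith
        exact ⟨⟨fun h => absurd hqgt (not_lt.2 h.le), fun h => absurd hgt (not_lt.2 h.le)⟩,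
          ⟨fun h => absurd h (ne_of_gt hqgt), fun h => absurd h hpe⟩⟩
  · intro hqp
    have h := congrFun hqp a
    beta_reduce at h
    linarith

end stmt2Aux

/-- `C(p) = {p}` iff `p = (1/|I|)·e_I` for some nonempty `I ⊆ [n]` with
both `G[I]` and `G[V∖I]` connected. -/
theorem stmt2 {n : ℕ} (hn : 1 ≤ n) (μ : Fin (n + 1) → Fin (n + 1) → ℕ)
    (hsym : ∀ i j, μ i j = μ j i) (hloop : ∀ i, μ i i = 0)
    (hconn : ConnectedOn μ Set.univ)
    (p : Fin (n + 1) → ℝ) (hp : p ∈ U n) :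
    openCell μ p = {p} ↔
      ∃ I : Finset (Fin (n + 1)), I.Nonempty ∧ Fin.last n ∉ I ∧
        ConnectedOn μ (I : Set (Fin (n + 1))) ∧
        ConnectedOn μ ((I : Set (Fin (n + 1)))ᶜ) ∧ p = qI I := by
  constructor
  · intro h
    classical
    set I : Finset (Fin (n+1)) :=
      univ.filter (fun i => ¬ pEquiv μ p i (Fin.last n)) with hIdef
    have hmemI : ∀ i, i ∈ I ↔ ¬ pEquiv μ p i (Fin.last n) := by
      intro i; simp [hIdef]
    have hlastI : Fin.last n ∉ I := by
      rw [hmemI]; exact fun hc => hc .refl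
    have hsum := sum_all' hp
    have hpK : ∀ i, i ∉ I → p i = 0 := by
      intro i hi
      rw [hmemI, not_not] at hi
      rw [pEquiv_eq hi, hp.1]
    have hIne : I.Nonempty := by
      rw [Finset.nonempty_iff_ne_empty]
      intro hI0
      have hz : ∀ i, p i = 0 := fun i => hpK i (by simp [hI0])
      rw [Finset.sum_congr rfl (fun i _ => hz i)] at hsum
      simp at hsum
    have hclass : ∀ i ∈ I, ∀ j ∈ I, pEquiv μ p i j := by
      intro i hi j hj
      by_contra hcon
      have hi' := (hmemI i).1 hi
      have hj' := (hmemI j).1 hj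
      obtain ⟨q, hq, hqp⟩ := perturb' hp
        (univ.filter (fun k => pEquiv μ p i k)) (univ.filter (fun k => pEquiv μ p j k))
        ⟨i, by simp; exact .refl⟩ ⟨j, by simp; exact .refl⟩
        (by
          rw [Finset.disjoint_left]
          intro k hkA hkB
          simp only [mem_filter, mem_univ, true_and] at hkA hkB
          exact hcon (hkA.trans (pEquiv_symm hsym hkB)))
        (by simp only [mem_filter, mem_univ, true_and]; exact hi')
        (by simp only [mem_filter, mem_univ, true_and]; exact hj')
        (by
          intro a b hμ hpe
          simp only [mem_filter, mem_univ, true_and]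
          exact ⟨fun hpa => hpa.tail ⟨hμ, hpe⟩,
            fun hpb => hpb.tail ⟨by rw [hsym]; exact hμ, hpe.symm⟩⟩)
        (by
          intro a b hμ hpe
          simp only [mem_filter, mem_univ, true_and]
          exact ⟨fun hpa => hpa.tail ⟨hμ, hpe⟩,
            fun hpb => hpb.tail ⟨by rw [hsym]; exact hμ, hpe.symm⟩⟩)
      rw [h] at hq
      exact hqp hq
    have hclI : ∀ a b, a ∈ (I : Set (Fin (n+1))) → 1 ≤ μ a b → p a = p b →
        b ∈ (I : Set (Fin (n+1))) := by
      intro a b ha hμ hpe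
      rw [Finset.mem_coe, hmemI] at ha ⊢
      exact fun hb => ha (Relation.ReflTransGen.head ⟨hμ, hpe⟩ hb)
    have hmemC : ∀ i, i ∈ ((I : Set (Fin (n+1))))ᶜ ↔ pEquiv μ p i (Fin.last n) := by
      intro i
      rw [Set.mem_compl_iff, Finset.mem_coe, hmemI, not_not]
    have hclC : ∀ a b, a ∈ ((I : Set (Fin (n+1))))ᶜ → 1 ≤ μ a b → p a = p b →
        b ∈ ((I : Set (Fin (n+1))))ᶜ := by
      intro a b ha hμ hpe
      rw [hmemC] at ha ⊢
      exact Relation.ReflTransGen.head ⟨by rw [hsym]; exact hμ, hpe.symm⟩ ha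
    refine ⟨I, hIne, hlastI, ?_, ?_, ?_⟩
    · intro i hi j hj
      exact (walk_in _ hi hclI (hclass i hi j hj)).2
    · intro i hi j hj
      have hij : pEquiv μ p i j :=
        ((hmemC i).1 hi).trans (pEquiv_symm hsym ((hmemC j).1 hj))
      exact (walk_in _ hi hclC hij).2
    · obtain ⟨i1, hi1⟩ := hIne
      have hconst : ∀ i ∈ I, p i = p i1 := fun i hi => pEquiv_eq (hclass i hi i1 hi1)
      have hsplit : ∑ i ∈ I, p i = 1 := by
        rw [← Finset.sum_add_sum_compl I p] at hsum
        rw [Finset.sum_eq_zero (fun i hi => hpK i (Finset.mem_compl.1 hi))] at hsum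
        linarith
      have hcardpos : (0:ℝ) < I.card := by
        exact_mod_cast Finset.card_pos.2 ⟨i1, hi1⟩
      have hcardsum : ∑ i ∈ I, p i = I.card * p i1 := by
        rw [Finset.sum_congr rfl hconst, Finset.sum_const, nsmul_eq_mul]
      have hval : p i1 = 1 / (I.card : ℝ) := by
        rw [hcardsum] at hsplit
        field_simp
        linarith
      funext i
      by_cases hi : i ∈ I
      · rw [hconst i hi, hval]; simp [qI, hi]
      · rw [hpK i hi]; simp [qI, hi]
  · rintro ⟨I, hIne, hlastI, hcI, hcIc, rfl⟩
    ext q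
    simp only [Set.mem_singleton_iff]
    constructor
    · rintro ⟨hqU, hq⟩
      have hcard : (0:ℝ) < I.card := by exact_mod_cast hIne.card_pos
      have hqcI : ∀ a b, a ∈ (I : Set (Fin (n+1))) → b ∈ (I : Set (Fin (n+1))) →
          1 ≤ μ a b → q a = q b := by
        intro a b ha hb hμ
        exact (hq a b hμ).2.mpr (by
          rw [Finset.mem_coe] at ha hb
          simp [qI, ha, hb])
      have hqcC : ∀ a b, a ∈ ((I : Set (Fin (n+1))))ᶜ → b ∈ ((I : Set (Fin (n+1))))ᶜ →
          1 ≤ μ a b → q a = q b := by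
        intro a b ha hb hμ
        rw [Set.mem_compl_iff, Finset.mem_coe] at ha hb
        exact (hq a b hμ).2.mpr (by simp [qI, ha, hb])
      have hlastC : Fin.last n ∈ ((I : Set (Fin (n+1))))ᶜ := by
        rw [Set.mem_compl_iff, Finset.mem_coe]; exact hlastI
      have hq0 : ∀ i, i ∉ I → q i = 0 := by
        intro i hi
        have hw := hcIc i (by rwa [Set.mem_compl_iff, Finset.mem_coe]) (Fin.last n) hlastC
        exact (walk_const q hqcC hw).trans hqU.1
      obtain ⟨i1, hi1⟩ := hIne
      have hqconst : ∀ i ∈ I, q i = q i1 := by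
        intro i hi
        exact walk_const q hqcI (hcI i (Finset.mem_coe.2 hi) i1 (Finset.mem_coe.2 hi1))
      have hqsum : ∑ i : Fin (n+1), q i = 1 := sum_all' hqU
      rw [← Finset.sum_add_sum_compl I q] at hqsum
      rw [Finset.sum_eq_zero (fun i hi => hq0 i (Finset.mem_compl.1 hi))] at hqsum
      rw [Finset.sum_congr rfl hqconst, Finset.sum_const, nsmul_eq_mul] at hqsum
      have hval : q i1 = 1 / (I.card : ℝ) := by
        field_simp
        linarith
      funext i
      by_cases hi : i ∈ I
      · rw [hqconst i hi, hval]
        simp [qI, hi]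
      · rw [hq0 i hi]
        simp [qI, hi]
    · rintro rfl
      exact ⟨hp, fun i j _ => ⟨Iff.rfl, Iff.rfl⟩⟩
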